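/- One has φ(p*(δ)) ≥ p̂ if and only if δ·(1−λ) ≥ (√5 − 1)/2, where φ(p) := (1−λ)p/(1−λp), p*(δ) := c(1−δ)/(c(1−δ) + g·(1 − δ(1−λ))), and p̂ := c(1−δ)/(c(1−δ) + g·(1−δ + λδ(1+δ−λδ))). -/

import Mathlib

/-- `φ(p*(δ)) ≥ p̂` if and only if `δ(1−λ) ≥ (√5 − 1)/2`. -/
theorem phi_pstar_ge_phat_iff
    (c g lam δ : ℝ) (hc : 0 < c) (hg : 0 < g)
    (hlam : lam ∈ Set.Ioo (0 : ℝ) 1) (hδ : δ ∈ Set.Ioo (0 : ℝ) 1) :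
    (fun p : ℝ => (1 - lam) * p / (1 - lam * p))
        (c * (1 - δ) / (c * (1 - δ) + g * (1 - δ * (1 - lam))))
      ≥ c * (1 - δ) / (c * (1 - δ) + g * (1 - δ + lam * δ * (1 + δ - lam * δ))) ↔
    δ * (1 - lam) ≥ (Real.sqrt 5 - 1) / 2 := by
  obtain ⟨hl0, hl1⟩ := hlam
  obtain ⟨hd0, hd1⟩ := hδ
  have hx0 : 0 < δ * (1 - lam) := mul_pos hd0 (by linarith)
  have hx1 : δ * (1 - lam) < 1 := by nlinarith
  have hA : 0 < c * (1 - δ) := mul_pos hc (by linarith)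
  have hB : 0 < g * (1 - δ * (1 - lam)) := mul_pos hg (by linarith)
  have hC : 0 < g * (1 - δ + lam * δ * (1 + δ - lam * δ)) := by
    apply mul_pos hg; nlinarith
  have hAB : 0 < c * (1 - δ) + g * (1 - δ * (1 - lam)) := by linarith
  have hAC : 0 < c * (1 - δ) + g * (1 - δ + lam * δ * (1 + δ - lam * δ)) := by linarith
  have hLA : 0 < (1 - lam) * (c * (1 - δ)) := mul_pos (by linarith) hA
  have hLAB : 0 < (1 - lam) * (c * (1 - δ)) + g * (1 - δ * (1 - lam)) := by linarith
  -- simplify φ(p*)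
  have e1 : 1 - lam * (c * (1 - δ) / (c * (1 - δ) + g * (1 - δ * (1 - lam))))
      = ((1 - lam) * (c * (1 - δ)) + g * (1 - δ * (1 - lam)))
        / (c * (1 - δ) + g * (1 - δ * (1 - lam))) := by
    field_simp
    ring
  have e2 : (fun p : ℝ => (1 - lam) * p / (1 - lam * p))
        (c * (1 - δ) / (c * (1 - δ) + g * (1 - δ * (1 - lam))))
      = (1 - lam) * (c * (1 - δ))
        / ((1 - lam) * (c * (1 - δ)) + g * (1 - δ * (1 - lam))) := by
    simp only
    rw [e1, div_div_eq_mul_div]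
    rw [div_eq_div_iff (by positivity) (by positivity)]
    field_simp
    exact mul_div_cancel_left₀ _ (ne_of_gt (by linarith))
  rw [e2, ge_iff_le, div_le_div_iff₀ hAC hLAB]
  have hs : Real.sqrt 5 ^ 2 = 5 := Real.sq_sqrt (by norm_num)
  have hs0 : 0 ≤ Real.sqrt 5 := Real.sqrt_nonneg 5
  constructor
  · intro h
    rw [ge_iff_le, div_le_iff₀ (by norm_num : (0:ℝ) < 2), sub_le_iff_le_add]
    -- from h deduce x^2 + x - 1 ≥ 0
    have key : (δ * (1 - lam)) ^ 2 + δ * (1 - lam) - 1 ≥ 0 := by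
      have id : (1 - lam) * (c * (1 - δ))
            * (c * (1 - δ) + g * (1 - δ + lam * δ * (1 + δ - lam * δ)))
          - c * (1 - δ)
            * ((1 - lam) * (c * (1 - δ)) + g * (1 - δ * (1 - lam)))
          = (c * (1 - δ)) * g * lam * ((δ * (1 - lam)) ^ 2 + δ * (1 - lam) - 1) := by
        ring
      nlinarith [mul_pos (mul_pos hA hg) hl0]
    nlinarith [sq_nonneg (2 * (δ * (1 - lam)) + 1 + Real.sqrt 5)]
  · intro h
    have hx : (Real.sqrt 5 - 1) / 2 ≤ δ * (1 - lam) := h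
    have key : (δ * (1 - lam)) ^ 2 + δ * (1 - lam) - 1 ≥ 0 := by
      nlinarith [sq_nonneg (2 * (δ * (1 - lam)) + 1 - Real.sqrt 5)]
    nlinarith [mul_pos (mul_pos hA hg) hl0, key]
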